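/- In the pruned token CoMDP, the positive-threshold level is independent of the token: for any belief support B and any α, β ∈ B, the least resource level from which a safe positive-goal policy exists from (B, α) equals the one from (B, β). -/
import Mathlib


open Classical Finset Filter
attribute [local instance] Classical.propDecidable

noncomputable section

variable {S A Ω : Type*} [Fintype S] [DecidableEq S] [Fintype A] [Fintype Ω]

/-- A consumption POMDP: probabilistic transitions `δ`, probabilistic
observations `obs`, consumption `γ`, reload states `R`, capacity `cap` and
(absorbing, observable) goal states `Goal`. -/
structure CoPOMDP (S A Ω : Type*) [Fintype S] [Fintype Ω] where
  δ : S → A → S → ℝ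
  δ_nonneg : ∀ s a t, 0 ≤ δ s a t
  δ_sum : ∀ s a, ∑ t, δ s a t = 1
  obs : S → Ω → ℝ
  obs_nonneg : ∀ s o, 0 ≤ obs s o
  obs_sum : ∀ s, ∑ o, obs s o = 1
  γ : S → A → ℕ
  R : Set S
  cap : ℕ
  Goal : Set S

namespace CoPOMDP

/-- Resource update: consumption is subtracted (after reloading to `cap` in
reload states); `⊥` marks exhaustion and is absorbing. -/
def resup (M : CoPOMDP S A Ω) (ℓ : WithBot ℕ) (s : S) (a : A) : WithBot ℕ :=
  ℓ.recBotCoe ⊥ fun n =>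
    if s ∈ M.R then (if M.γ s a ≤ M.cap then ((M.cap - M.γ s a : ℕ) : WithBot ℕ) else ⊥)
    else (if M.γ s a ≤ n then ((n - M.γ s a : ℕ) : WithBot ℕ) else ⊥)

/-- A history: the initial observation and resource level, followed by the
sequence of actions, observations and resource levels witnessed so far. -/
structure Hist (A Ω : Type*) where
  o0 : Ω
  l0 : WithBot ℕ
  steps : List (A × Ω × WithBot ℕ)

/-- The last resource level of a history. -/
def Hist.lastLev (h : Hist A Ω) : WithBot ℕ :=
  (h.steps.getLast?).elim h.l0 (fun x => x.2.2)

/-- Extending a history by an action, an observation and a new resource level. -/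
def Hist.ext (h : Hist A Ω) (a : A) (o : Ω) (ℓ : WithBot ℕ) : Hist A Ω :=
  ⟨h.o0, h.l0, h.steps ++ [(a, o, ℓ)]⟩

/-- A (randomized, history-dependent) policy. -/
abbrev Pol (A Ω : Type*) := Hist A Ω → A → ℝ

/-- `π` is a genuine policy: it assigns a probability distribution on actions
to every history. -/
def IsPol (π : Pol A Ω) : Prop := (∀ h a, 0 ≤ π h a) ∧ ∀ h, ∑ a, π h a = 1

/-- Histories (together with the hidden current state) that occur with positive
probability under policy `π`, when the initial state is sampled from `ι` and
the initial resource level is `ℓ0`. -/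
inductive Reach (M : CoPOMDP S A Ω) (ι : S → ℝ) (ℓ0 : WithBot ℕ) (π : Pol A Ω) :
    Hist A Ω → S → Prop
  | init {s o} : 0 < ι s → 0 < M.obs s o → Reach M ι ℓ0 π ⟨o, ℓ0, []⟩ s
  | step {h s a t o} : Reach M ι ℓ0 π h s → 0 < π h a → 0 < M.δ s a t →
      0 < M.obs t o → Reach M ι ℓ0 π (h.ext a o (M.resup h.lastLev s a)) t

/-- A policy is safe if with probability 1 (equivalently, along every
positive-probability history) the resource level never becomes `⊥`. -/
def Safe (M : CoPOMDP S A Ω) (ι : S → ℝ) (ℓ0 : WithBot ℕ) (π : Pol A Ω) : Prop :=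
  ∀ h s, Reach M ι ℓ0 π h s → h.lastLev ≠ ⊥

/-- Probability of reaching a goal state within `n` more steps, given history
`h` and hidden current state `s`, under policy `π`. -/
def reachP (M : CoPOMDP S A Ω) (π : Pol A Ω) : ℕ → Hist A Ω → S → ℝ
  | 0, _, s => if s ∈ M.Goal then 1 else 0
  | n + 1, h, s =>
    if s ∈ M.Goal then 1 else
      ∑ a, π h a * ∑ t, M.δ s a t * ∑ o, M.obs t o *
        M.reachP π n (h.ext a o (M.resup h.lastLev s a)) t

/-- Probability of reaching a goal state within `n` steps from the initial
distribution `ι` with initial resource level `ℓ0`. -/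
def reachP0 (M : CoPOMDP S A Ω) (ι : S → ℝ) (ℓ0 : WithBot ℕ) (π : Pol A Ω)
    (n : ℕ) : ℝ :=
  ∑ s, ι s * ∑ o, M.obs s o * M.reachP π n ⟨o, ℓ0, []⟩ s

/-- A goal policy: reaches a goal state with probability 1. -/
def ASGoal (M : CoPOMDP S A Ω) (ι : S → ℝ) (ℓ0 : WithBot ℕ) (π : Pol A Ω) : Prop :=
  Tendsto (fun n => M.reachP0 ι ℓ0 π n) atTop (nhds 1)

/-- A positive-goal policy: reaches a goal state with probability `≥ ε` for
some `ε > 0`. -/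
def PosGoal (M : CoPOMDP S A Ω) (ι : S → ℝ) (ℓ0 : WithBot ℕ) (π : Pol A Ω) : Prop :=
  ∃ ε > (0 : ℝ), ∃ n, ε ≤ M.reachP0 ι ℓ0 π n

/-- The uniform distribution over a finite set of states. -/
def unif (B : Finset S) : S → ℝ := fun s => if s ∈ B then ((B.card : ℝ))⁻¹ else 0

/-- The threshold level of a belief support `B`: the least resource level `ℓ`
such that a safe goal policy exists from the uniform distribution over `B` with
initial resource level `ℓ` (`∞` if none exists). -/
def Thr (M : CoPOMDP S A Ω) (B : Finset S) : ℕ∞ :=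
  sInf {e : ℕ∞ | ∃ ℓ : ℕ, e = (ℓ : ℕ∞) ∧ ∃ π : Pol A Ω, IsPol π ∧
    M.Safe (unif B) (ℓ : WithBot ℕ) π ∧ M.ASGoal (unif B) (ℓ : WithBot ℕ) π}

/-- The belief support after the initial observation `o`. -/
def belief0 (M : CoPOMDP S A Ω) (ι : S → ℝ) (o : Ω) : Finset S :=
  univ.filter fun s => 0 < ι s ∧ 0 < M.obs s o

/-- One-step belief support update: the states that can emit the new
observation `o` and are successors of a state of `B` conforming to the
witnessed resource levels. -/
def beliefUpd (M : CoPOMDP S A Ω) (B : Finset S) (ℓprev : WithBot ℕ) (a : A)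
    (o : Ω) (ℓ : WithBot ℕ) : Finset S :=
  univ.filter fun t => 0 < M.obs t o ∧
    ∃ s ∈ B, 0 < M.δ s a t ∧ (ℓprev = ⊥ ∨ M.resup ℓprev s a = ℓ)

/-- Belief support after processing a list of steps. -/
def beliefAux (M : CoPOMDP S A Ω) (B : Finset S) (ℓ : WithBot ℕ) :
    List (A × Ω × WithBot ℕ) → Finset S
  | [] => B
  | (a, o, ℓ') :: rest => M.beliefAux (M.beliefUpd B ℓ a o ℓ') ℓ' rest

/-- The belief support of a history. -/
def belief (M : CoPOMDP S A Ω) (ι : S → ℝ) (h : Hist A Ω) : Finset S :=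
  M.beliefAux (M.belief0 ι h.o0) h.l0 h.steps

end CoPOMDP

/-! ### Consumption MDPs with a variable reload set, and the token CoMDP -/

/-- A consumption MDP (on state space `T`); the reload set is kept as a field
but safety and threshold levels below are parametrized by a reload set, so
that reload states can be pruned. -/
structure CoMDP (T A : Type*) [Fintype T] where
  δ : T → A → T → ℝ
  γ : T → A → ℕ
  R : Set T
  cap : ℕ
  Goal : Set T

namespace CoMDP

variable {T : Type*} [Fintype T]

/-- Resource update with reload set `Rel`. -/
def resupW (N : CoMDP T A) (Rel : Set T) (ℓ : WithBot ℕ) (t : T) (a : A) : WithBot ℕ :=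
  ℓ.recBotCoe ⊥ fun n =>
    if t ∈ Rel then (if N.γ t a ≤ N.cap then ((N.cap - N.γ t a : ℕ) : WithBot ℕ) else ⊥)
    else (if N.γ t a ≤ n then ((n - N.γ t a : ℕ) : WithBot ℕ) else ⊥)

/-- A (deterministic, history-dependent) policy for a perfectly observable
consumption MDP. -/
abbrev PolC (T A : Type*) := List (T × WithBot ℕ) → T × WithBot ℕ → A

/-- Configurations (with their histories) reachable with positive probability
from `c0` under `π`, with reload set `Rel`. -/
inductive ReachW (N : CoMDP T A) (Rel : Set T) (π : PolC T A) (c0 : T × WithBot ℕ) :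
    List (T × WithBot ℕ) → T × WithBot ℕ → Prop
  | refl : ReachW N Rel π c0 [] c0
  | step {h c t} : ReachW N Rel π c0 h c → 0 < N.δ c.1 (π h c) t →
      ReachW N Rel π c0 (h ++ [c]) (t, N.resupW Rel c.2 c.1 (π h c))

/-- Safety (w.r.t. reload set `Rel`): the resource level never becomes `⊥`. -/
def SafeW (N : CoMDP T A) (Rel : Set T) (π : PolC T A) (c0 : T × WithBot ℕ) : Prop :=
  ∀ h c, ReachW N Rel π c0 h c → c.2 ≠ ⊥

/-- Probability of reaching a goal state within `n` steps. -/
def reachPW (N : CoMDP T A) (Rel : Set T) (π : PolC T A) :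
    ℕ → List (T × WithBot ℕ) → T × WithBot ℕ → ℝ
  | 0, _, c => if c.1 ∈ N.Goal then 1 else 0
  | n + 1, h, c =>
    if c.1 ∈ N.Goal then 1 else
      ∑ t, N.δ c.1 (π h c) t * N.reachPW Rel π n (h ++ [c]) (t, N.resupW Rel c.2 c.1 (π h c))

/-- A positive-goal policy: reaches the goal with probability `≥ ε` for some `ε > 0`. -/
def PosGoalW (N : CoMDP T A) (Rel : Set T) (π : PolC T A) (c0 : T × WithBot ℕ) : Prop :=
  ∃ ε > (0 : ℝ), ∃ n, ε ≤ N.reachPW Rel π n [] c0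

/-- The positive-threshold level of state `t` w.r.t. reload set `Rel`: the least
initial resource level from which a safe positive-goal policy exists (`∞` if none). -/
def TposW (N : CoMDP T A) (Rel : Set T) (t : T) : ℕ∞ :=
  sInf {e : ℕ∞ | ∃ ℓ : ℕ, e = (ℓ : ℕ∞) ∧ ∃ π : PolC T A,
    N.SafeW Rel π (t, (ℓ : WithBot ℕ)) ∧ N.PosGoalW Rel π (t, (ℓ : WithBot ℕ))}

/-- The pruned reload set: the greatest fixed point of removing, from the
current reload set, all reload states whose positive-threshold level is `∞`
(equivalently, the union of all reload sets `Rel ⊆ R` all of whose states have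
a finite positive-threshold level w.r.t. `Rel` itself). -/
def pruned (N : CoMDP T A) : Set T :=
  ⋃₀ {Rel : Set T | Rel ⊆ N.R ∧ ∀ r ∈ Rel, N.TposW Rel r ≠ ⊤}

end CoMDP

namespace CoPOMDP

/-- States of the token CoMDP: a belief support together with a token, which is
either a state of the belief support or the empty guess `ε` (modeled by `none`). -/
abbrev TState (S : Type*) := Finset S × Option S

/-- Successor states with positive probability. -/
def succS (M : CoPOMDP S A Ω) (s : S) (a : A) : Finset S :=
  univ.filter fun t => 0 < M.δ s a t

/-- Belief-support successors of `B` under `a`: for every observation `o`, the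
(nonempty) set of successors of states of `B` that can emit `o`. -/
def succB (M : CoPOMDP S A Ω) (B : Finset S) (a : A) : Finset (Finset S) :=
  ((univ : Finset Ω).image fun o =>
      univ.filter fun t => 0 < M.obs t o ∧ ∃ s ∈ B, 0 < M.δ s a t).filter
    fun B' => B'.Nonempty

/-- Successors in the token CoMDP: the belief support evolves as in the
CoPOMDP, and the token follows a transition when possible, otherwise it becomes
the empty guess `ε` (and `ε` stays `ε`). -/
def tokSucc (M : CoPOMDP S A Ω) : TState S → A → Finset (TState S)
  | (B, none), a => (M.succB B a).image fun B' => (B', (none : Option S))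
  | (B, some α), a => (M.succB B a).biUnion fun B' =>
      if ((M.succS α a) ∩ B').Nonempty then
        ((M.succS α a) ∩ B').image fun α' => (B', some α')
      else {(B', (none : Option S))}

/-- Consumption in the token CoMDP: the (by consistency common) consumption of
the states of the belief support. -/
def tokγ (M : CoPOMDP S A Ω) (x : TState S) (a : A) : ℕ :=
  if h : x.1.Nonempty then M.γ h.choose a else 0

/-- The token CoMDP of a CoPOMDP: transitions are uniform over the token
successors, reload states are the pairs whose whole belief support consists of
reload states, and goal states are the pairs whose belief support consists of
goal states. -/
def tokenCoMDP (M : CoPOMDP S A Ω) : CoMDP (TState S) A where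
  δ := fun x a y => if y ∈ M.tokSucc x a then ((M.tokSucc x a).card : ℝ)⁻¹ else 0
  γ := M.tokγ
  R := {x : TState S | ∀ s ∈ x.1, s ∈ M.R}
  cap := M.cap
  Goal := {x : TState S | ∀ s ∈ x.1, s ∈ M.Goal}

/-- Consistency: lookalike states (states that can emit a common observation
with positive probability) have equal consumption under every action. -/
def Consistent (M : CoPOMDP S A Ω) : Prop :=
  ∀ s t : S, (∃ o, 0 < M.obs s o ∧ 0 < M.obs t o) → ∀ a, M.γ s a = M.γ t a

end CoPOMDP


/-! ### Auxiliary development -/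

section Aux

set_option linter.unusedSectionVars false

variable {T : Type*} [Fintype T]

namespace CoMDP

lemma resupW_bot (N : CoMDP T A) (Rel : Set T) (t : T) (a : A) :
    N.resupW Rel ⊥ t a = ⊥ := rfl

lemma resupW_coe (N : CoMDP T A) (Rel : Set T) (n : ℕ) (t : T) (a : A) :
    N.resupW Rel (n : WithBot ℕ) t a =
      if t ∈ Rel then (if N.γ t a ≤ N.cap then ((N.cap - N.γ t a : ℕ) : WithBot ℕ) else ⊥)
      else (if N.γ t a ≤ n then ((n - N.γ t a : ℕ) : WithBot ℕ) else ⊥) := rfl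

lemma resupW_congr (N : CoMDP T A) {Rel Rel' : Set T} {x y : T} {a : A}
    (hγ : N.γ x a = N.γ y a) (hmem : x ∈ Rel ↔ y ∈ Rel') (ℓ : WithBot ℕ) :
    N.resupW Rel ℓ x a = N.resupW Rel' ℓ y a := by
  induction ℓ using WithBot.recBotCoe with
  | bot => rfl
  | coe n =>
    unfold CoMDP.resupW
    by_cases h : x ∈ Rel
    · simp only [WithBot.recBotCoe_coe, if_pos h, if_pos (hmem.1 h), hγ]
    · simp only [WithBot.recBotCoe_coe, if_neg h, if_neg (fun h' => h (hmem.2 h')), hγ]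

lemma ReachW_nil_eq {N : CoMDP T A} {Rel : Set T} {π : PolC T A} {c0 c : T × WithBot ℕ}
    (h : ReachW N Rel π c0 [] c) : c = c0 := by
  generalize hl : ([] : List (T × WithBot ℕ)) = l at h
  induction h with
  | refl => rfl
  | step _ _ _ => simp at hl

lemma reachPW_nonneg (N : CoMDP T A) (hδ : ∀ x a y, 0 ≤ N.δ x a y)
    (Rel : Set T) (π : PolC T A) : ∀ n h c, 0 ≤ N.reachPW Rel π n h c := by
  intro n
  induction n with
  | zero => intro h c; rw [reachPW]; split <;> norm_num
  | succ n ih =>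
    intro h c; rw [reachPW]; split
    · norm_num
    · exact Finset.sum_nonneg fun t _ => mul_nonneg (hδ _ _ _) (ih _ _)

lemma exists_goal_of_reachPW_pos {N : CoMDP T A} (hδ : ∀ x a y, 0 ≤ N.δ x a y)
    {Rel : Set T} {π : PolC T A} {c0 : T × WithBot ℕ} :
    ∀ (n : ℕ) (h : List (T × WithBot ℕ)) (c : T × WithBot ℕ),
      ReachW N Rel π c0 h c → 0 < N.reachPW Rel π n h c →
      ∃ h' c', ReachW N Rel π c0 h' c' ∧ c'.1 ∈ N.Goal := by
  intro n
  induction n with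
  | zero =>
    intro h c hr hp
    by_cases hg : c.1 ∈ N.Goal
    · exact ⟨h, c, hr, hg⟩
    · rw [reachPW, if_neg hg] at hp; exact absurd hp (lt_irrefl 0)
  | succ n ih =>
    intro h c hr hp
    by_cases hg : c.1 ∈ N.Goal
    · exact ⟨h, c, hr, hg⟩
    · rw [reachPW, if_neg hg] at hp
      have hex : ∃ t, 0 < N.δ c.1 (π h c) t *
          N.reachPW Rel π n (h ++ [c]) (t, N.resupW Rel c.2 c.1 (π h c)) := by
        by_contra hall
        push_neg at hall
        exact absurd hp (not_lt.2 (Finset.sum_nonpos fun t _ => hall t))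
      obtain ⟨t, ht⟩ := hex
      rcases mul_pos_iff.1 ht with ⟨h1, h2⟩ | ⟨h1, _⟩
      · exact ih _ _ (ReachW.step hr h1) h2
      · exact absurd h1 (not_lt.2 (hδ _ _ _))

lemma pos_start_of_pos {N : CoMDP T A} (hδ : ∀ x a y, 0 ≤ N.δ x a y)
    {Rel : Set T} {π : PolC T A} {c0 : T × WithBot ℕ} {h : List (T × WithBot ℕ)}
    {c : T × WithBot ℕ} (hr : ReachW N Rel π c0 h c) :
    ∀ m, 0 < N.reachPW Rel π m h c → ∃ m', 0 < N.reachPW Rel π m' [] c0 := by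
  induction hr with
  | refl => exact fun m hm => ⟨m, hm⟩
  | @step h c t hr hδpos ih =>
    intro m hm
    refine ih (m + 1) ?_
    rw [reachPW]
    split
    · norm_num
    · refine lt_of_lt_of_le (mul_pos hδpos hm) ?_
      exact Finset.single_le_sum
        (f := fun u => N.δ c.1 (π h c) u *
          N.reachPW Rel π m (h ++ [c]) (u, N.resupW Rel c.2 c.1 (π h c)))
        (fun u _ => mul_nonneg (hδ _ _ _) (reachPW_nonneg N hδ _ _ _ _ _))
        (Finset.mem_univ t)

lemma pos_of_reach_goal {N : CoMDP T A} (hδ : ∀ x a y, 0 ≤ N.δ x a y)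
    {Rel : Set T} {π : PolC T A} {c0 : T × WithBot ℕ} {h : List (T × WithBot ℕ)}
    {c : T × WithBot ℕ} (hr : ReachW N Rel π c0 h c) (hg : c.1 ∈ N.Goal) :
    N.PosGoalW Rel π c0 := by
  obtain ⟨m, hm⟩ := pos_start_of_pos hδ hr 0 (by rw [reachPW, if_pos hg]; norm_num)
  exact ⟨_, hm, m, le_refl _⟩

lemma TposW_ne_top_iff (N : CoMDP T A) (Rel : Set T) (x : T) :
    N.TposW Rel x ≠ ⊤ ↔ ∃ ℓ : ℕ, ∃ π : PolC T A,
      N.SafeW Rel π (x, (ℓ : WithBot ℕ)) ∧ N.PosGoalW Rel π (x, (ℓ : WithBot ℕ)) := by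
  constructor
  · intro h
    by_contra hn
    push_neg at hn
    refine h ?_
    rw [TposW, show {e : ℕ∞ | ∃ ℓ : ℕ, e = (ℓ : ℕ∞) ∧ ∃ π : PolC T A,
        N.SafeW Rel π (x, (ℓ : WithBot ℕ)) ∧ N.PosGoalW Rel π (x, (ℓ : WithBot ℕ))} = ∅ from ?_,
      sInf_empty]
    ext e
    simp only [Set.mem_setOf_eq, Set.mem_empty_iff_false, iff_false, not_exists]
    rintro ℓ ⟨rfl, π, h1, h2⟩
    exact hn ℓ π h1 h2
  · rintro ⟨ℓ, π, h1, h2⟩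
    have hmem : (ℓ : ℕ∞) ∈ {e : ℕ∞ | ∃ ℓ : ℕ, e = (ℓ : ℕ∞) ∧ ∃ π : PolC T A,
        N.SafeW Rel π (x, (ℓ : WithBot ℕ)) ∧ N.PosGoalW Rel π (x, (ℓ : WithBot ℕ))} :=
      ⟨ℓ, rfl, π, h1, h2⟩
    exact ne_top_of_le_ne_top (by simp) (sInf_le hmem)

end CoMDP

/-- History translation: fold a step translator over a history. -/
def trF {C : Type*} (f : List C → C → C) (l : List C) : List C :=
  l.foldl (fun acc c => acc ++ [f acc c]) []

lemma trF_nil {C : Type*} (f : List C → C → C) : trF f [] = [] := rfl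

lemma trF_concat {C : Type*} (f : List C → C → C) (h : List C) (c : C) :
    trF f (h ++ [c]) = trF f h ++ [f (trF f h) c] := by
  unfold trF
  rw [List.foldl_append]
  rfl

lemma take_eq_of_prefix {α : Type*} {l p : List α} (h : l <+: p) : p.take l.length = l := by
  obtain ⟨t, rfl⟩ := h; simp


namespace CoMDP

lemma withBot_exists_nat (x : WithBot ℕ) (hx : x ≠ ⊥) : ∃ n : ℕ, x = (n : WithBot ℕ) := by
  cases x with
  | bot => exact absurd rfl hx
  | coe v => exact ⟨v, rfl⟩

/-- Recompute resource levels w.r.t. reload set `Rel` along a history. -/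
def retime (N : CoMDP T A) (Rel : Set T) (σ : PolC T A) :
    List (T × WithBot ℕ) → T × WithBot ℕ → T × WithBot ℕ := fun acc c =>
  match acc.getLast? with
  | none => c
  | some d => (c.1, N.resupW Rel d.2 d.1 (σ acc.dropLast d))

/-- The policy that plays `σ` on the retimed history. -/
def retimePol (N : CoMDP T A) (Rel : Set T) (σ : PolC T A) : PolC T A := fun h c =>
  σ (trF (N.retime Rel σ) h) (N.retime Rel σ (trF (N.retime Rel σ) h) c)

lemma retime_nil (N : CoMDP T A) (Rel : Set T) (σ : PolC T A) (c : T × WithBot ℕ) :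
    N.retime Rel σ [] c = c := rfl

lemma retime_concat (N : CoMDP T A) (Rel : Set T) (σ : PolC T A)
    (acc : List (T × WithBot ℕ)) (d c : T × WithBot ℕ) :
    N.retime Rel σ (acc ++ [d]) c = (c.1, N.resupW Rel d.2 d.1 (σ acc d)) := by
  simp only [retime, List.getLast?_concat, List.dropLast_concat]

lemma retime_fst (N : CoMDP T A) (Rel : Set T) (σ : PolC T A)
    (acc : List (T × WithBot ℕ)) (c : T × WithBot ℕ) :
    (N.retime Rel σ acc c).1 = c.1 := by
  unfold retime
  cases acc.getLast? <;> rfl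

lemma retime_reachPW (N : CoMDP T A) (Rel Rel' : Set T) (σ : PolC T A) :
    ∀ (n : ℕ) (h : List (T × WithBot ℕ)) (c : T × WithBot ℕ),
      N.reachPW Rel' (N.retimePol Rel σ) n h c =
      N.reachPW Rel σ n (trF (N.retime Rel σ) h)
        (N.retime Rel σ (trF (N.retime Rel σ) h) c) := by
  intro n
  induction n with
  | zero =>
    intro h c
    rw [reachPW, reachPW, retime_fst]
  | succ n ih =>
    intro h c
    rw [reachPW, reachPW, retime_fst]
    by_cases hg : c.1 ∈ N.Goal
    · rw [if_pos hg, if_pos hg]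
    · rw [if_neg hg, if_neg hg]
      refine Finset.sum_congr rfl fun t _ => ?_
      rw [ih (h ++ [c]), trF_concat, retime_concat, retime_fst]
      rfl

lemma retime_safe_inv (N : CoMDP T A) {Rel Rel' : Set T} (hsub : Rel ⊆ Rel')
    {r : T} (hr : r ∈ Rel) {ℓ : ℕ} {σ : PolC T A}
    (hsafe : N.SafeW Rel σ (r, (ℓ : WithBot ℕ))) :
    ∀ {h c}, ReachW N Rel' (N.retimePol Rel σ) (r, (ℓ : WithBot ℕ)) h c →
      ReachW N Rel σ (r, (ℓ : WithBot ℕ)) (trF (N.retime Rel σ) h)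
          (N.retime Rel σ (trF (N.retime Rel σ) h) c) ∧
        (N.retime Rel σ (trF (N.retime Rel σ) h) c).2 ≤ c.2 ∧
        ((N.retime Rel σ (trF (N.retime Rel σ) h) c).2 ≤ (N.cap : WithBot ℕ) ∨ h = []) := by
  intro h c hreach
  induction hreach with
  | refl => exact ⟨ReachW.refl, le_refl _, Or.inr rfl⟩
  | @step h c t hr' hδ ih =>
    obtain ⟨ihR, ihLe, ihCap⟩ := ih
    have hfst : (N.retime Rel σ (trF (N.retime Rel σ) h) c).1 = c.1 :=
      retime_fst N Rel σ _ c
    have hδ' : 0 < N.δ (N.retime Rel σ (trF (N.retime Rel σ) h) c).1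
        (σ (trF (N.retime Rel σ) h) (N.retime Rel σ (trF (N.retime Rel σ) h) c)) t := by
      rw [hfst]; exact hδ
    have hsim := ReachW.step ihR hδ'
    have hsafeS := hsafe _ _ hsim
    -- the retimed current level is not ⊥
    have hc2s : (N.retime Rel σ (trF (N.retime Rel σ) h) c).2 ≠ ⊥ := by
      intro hbot
      rw [hbot] at hsafeS
      exact hsafeS rfl
    obtain ⟨m, hm⟩ := withBot_exists_nat _ hc2s
    have hc2 : c.2 ≠ ⊥ := by
      intro hbot
      rw [hbot, hm] at ihLe
      exact absurd (le_bot_iff.1 ihLe) (by simp)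
    obtain ⟨n, hn⟩ := withBot_exists_nat _ hc2
    have hmn : m ≤ n := by
      rw [hm, hn] at ihLe
      exact_mod_cast ihLe
    rw [trF_concat, retime_concat]
    rw [show N.retimePol Rel σ h c = σ (trF (N.retime Rel σ) h)
      (N.retime Rel σ (trF (N.retime Rel σ) h) c) from rfl]
    rw [hm, hfst] at hsafeS ⊢
    rw [hn]
    refine ⟨?_, ?_, ?_⟩
    · rw [hm, hfst] at hsim
      exact hsim
    · -- level comparison
      show N.resupW Rel (m : WithBot ℕ) c.1 _ ≤ N.resupW Rel' (n : WithBot ℕ) c.1 _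
      by_cases hR : c.1 ∈ Rel
      · have hR' : c.1 ∈ Rel' := hsub hR
        have hγcap : N.γ c.1 (σ (trF (N.retime Rel σ) h)
            (N.retime Rel σ (trF (N.retime Rel σ) h) c)) ≤ N.cap := by
          by_contra hgt
          exact hsafeS (by rw [resupW_coe, if_pos hR, if_neg hgt])
        rw [resupW_coe, resupW_coe, if_pos hR, if_pos hR', if_pos hγcap]
      · have hmcap : m ≤ N.cap := by
          rcases ihCap with hcap | hnil
          · rw [hm] at hcap; exact_mod_cast hcap
          · exfalso
            subst hnil
            have := ReachW_nil_eq hr'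
            rw [this] at hR
            exact hR hr
        have hγm : N.γ c.1 (σ (trF (N.retime Rel σ) h)
            (N.retime Rel σ (trF (N.retime Rel σ) h) c)) ≤ m := by
          by_contra hgt
          exact hsafeS (by rw [resupW_coe, if_neg hR, if_neg hgt])
        by_cases hR' : c.1 ∈ Rel'
        · rw [resupW_coe, resupW_coe, if_neg hR, if_pos hR', if_pos hγm,
            if_pos (le_trans hγm hmcap)]
          exact WithBot.coe_le_coe.2 (Nat.sub_le_sub_right hmcap _)
        · rw [resupW_coe, resupW_coe, if_neg hR, if_neg hR', if_pos hγm,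
            if_pos (le_trans hγm hmn)]
          exact WithBot.coe_le_coe.2 (Nat.sub_le_sub_right hmn _)
    · -- cap bound
      left
      show N.resupW Rel (m : WithBot ℕ) c.1 _ ≤ (N.cap : WithBot ℕ)
      by_cases hR : c.1 ∈ Rel
      · have hγcap : N.γ c.1 (σ (trF (N.retime Rel σ) h)
            (N.retime Rel σ (trF (N.retime Rel σ) h) c)) ≤ N.cap := by
          by_contra hgt
          exact hsafeS (by rw [resupW_coe, if_pos hR, if_neg hgt])
        rw [resupW_coe, if_pos hR, if_pos hγcap]
        exact WithBot.coe_le_coe.2 (Nat.sub_le _ _)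
      · have hmcap : m ≤ N.cap := by
          rcases ihCap with hcap | hnil
          · rw [hm] at hcap; exact_mod_cast hcap
          · exfalso
            subst hnil
            have := ReachW_nil_eq hr'
            rw [this] at hR
            exact hR hr
        have hγm : N.γ c.1 (σ (trF (N.retime Rel σ) h)
            (N.retime Rel σ (trF (N.retime Rel σ) h) c)) ≤ m := by
          by_contra hgt
          exact hsafeS (by rw [resupW_coe, if_neg hR, if_neg hgt])
        rw [resupW_coe, if_neg hR, if_pos hγm]
        exact WithBot.coe_le_coe.2 (le_trans (Nat.sub_le _ _) hmcap)

/-- Enlarging the reload set preserves existence of safe positive-goal policies,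
when starting from a reload state. -/
lemma upgrade_reload (N : CoMDP T A) {Rel Rel' : Set T} (hsub : Rel ⊆ Rel')
    {r : T} (hr : r ∈ Rel) {ℓ : ℕ} {σ : PolC T A}
    (hsafe : N.SafeW Rel σ (r, (ℓ : WithBot ℕ)))
    (hpos : N.PosGoalW Rel σ (r, (ℓ : WithBot ℕ))) :
    ∃ π : PolC T A, N.SafeW Rel' π (r, (ℓ : WithBot ℕ)) ∧
      N.PosGoalW Rel' π (r, (ℓ : WithBot ℕ)) := by
  refine ⟨N.retimePol Rel σ, ?_, ?_⟩
  · intro h c hreach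
    obtain ⟨hsim, hle, -⟩ := retime_safe_inv N hsub hr hsafe hreach
    have hne := hsafe _ _ hsim
    intro hbot
    rw [hbot] at hle
    exact hne (le_bot_iff.1 hle)
  · obtain ⟨ε, hε, n, hn⟩ := hpos
    refine ⟨ε, hε, n, ?_⟩
    rw [retime_reachPW]
    exact hn

end CoMDP


namespace CoMDP

lemma reach_of_prefix {N : CoMDP T A} {Rel : Set T} {π : PolC T A} {c0 : T × WithBot ℕ} :
    ∀ {hp : List (T × WithBot ℕ)} {cp : T × WithBot ℕ}, ReachW N Rel π c0 hp cp →
      ∀ {l : List (T × WithBot ℕ)} {q : T × WithBot ℕ},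
        l ++ [q] <+: hp ++ [cp] → ReachW N Rel π c0 l q := by
  intro hp cp hreach
  induction hreach with
  | refl =>
    intro l q hpre
    have hlen := hpre.length_le
    simp only [List.length_append, List.length_cons, List.length_nil, List.nil_append] at hlen
    have hl : l = [] := List.eq_nil_of_length_eq_zero (by omega)
    subst hl
    have := hpre.eq_of_length (by simp)
    simp only [List.nil_append, List.cons.injEq, and_true] at this
    rw [this]
    exact ReachW.refl
  | @step h c t hr hδ ih =>
    intro l q hpre
    rcases List.prefix_concat_iff.mp hpre with heq | hpre'
    · obtain ⟨rfl, hq⟩ := List.append_inj' heq rfl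
      simp only [List.cons.injEq, and_true] at hq
      rw [hq]
      exact ReachW.step hr hδ
    · exact ih hpre'

end CoMDP

section TokenTransport

open CoMDP CoPOMDP

set_option linter.unusedSectionVars false

variable (M : CoPOMDP S A Ω)

lemma tokSucc_fst_mem {x y : TState S} {a : A}
    (h : y ∈ M.tokSucc x a) : y.1 ∈ M.succB x.1 a := by
  obtain ⟨B, tok⟩ := x
  obtain ⟨C, τ⟩ := y
  cases tok with
  | none =>
    simp only [CoPOMDP.tokSucc, Finset.mem_image, Prod.mk.injEq] at h
    obtain ⟨B', hB', rfl, rfl⟩ := h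
    exact hB'
  | some α =>
    simp only [CoPOMDP.tokSucc, Finset.mem_biUnion] at h
    obtain ⟨B', hB', hmem⟩ := h
    split at hmem
    · simp only [Finset.mem_image, Prod.mk.injEq] at hmem
      obtain ⟨α', -, rfl, rfl⟩ := hmem
      exact hB'
    · simp only [Finset.mem_singleton, Prod.mk.injEq] at hmem
      obtain ⟨rfl, rfl⟩ := hmem
      exact hB'

lemma exists_tok {x : TState S} {C : Finset S} {a : A} (hC : C ∈ M.succB x.1 a) :
    ∃ τ : Option S, ((C, τ) : TState S) ∈ M.tokSucc x a := by
  obtain ⟨B, tok⟩ := x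
  cases tok with
  | none => exact ⟨none, Finset.mem_image_of_mem _ hC⟩
  | some α =>
    by_cases hne : ((M.succS α a) ∩ C).Nonempty
    · obtain ⟨z, hz⟩ := hne
      refine ⟨some z, Finset.mem_biUnion.2 ⟨C, hC, ?_⟩⟩
      rw [if_pos ⟨z, hz⟩]
      exact Finset.mem_image_of_mem _ hz
    · refine ⟨none, Finset.mem_biUnion.2 ⟨C, hC, ?_⟩⟩
      rw [if_neg hne]
      exact Finset.mem_singleton_self _

lemma tokδ_nonneg : ∀ (x : TState S) (a : A) (y : TState S), 0 ≤ (M.tokenCoMDP).δ x a y := by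
  intro x a y
  show 0 ≤ (if y ∈ M.tokSucc x a then (((M.tokSucc x a).card : ℝ))⁻¹ else 0)
  split
  · positivity
  · exact le_refl 0

lemma tokδ_pos_iff {x y : TState S} {a : A} :
    0 < (M.tokenCoMDP).δ x a y ↔ y ∈ M.tokSucc x a := by
  show 0 < (if y ∈ M.tokSucc x a then (((M.tokSucc x a).card : ℝ))⁻¹ else 0) ↔ _
  constructor
  · intro h
    by_contra hm
    rw [if_neg hm] at h
    exact lt_irrefl 0 h
  · intro hm
    rw [if_pos hm]
    have hc : 0 < (M.tokSucc x a).card := Finset.card_pos.2 ⟨y, hm⟩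
    have : (0 : ℝ) < ((M.tokSucc x a).card : ℝ) := by exact_mod_cast hc
    exact inv_pos.2 this

lemma tokγ_fst {x y : TState S} (hxy : x.1 = y.1) (a : A) :
    (M.tokenCoMDP).γ x a = (M.tokenCoMDP).γ y a := by
  obtain ⟨B, t1⟩ := x
  obtain ⟨B', t2⟩ := y
  simp only at hxy
  subst hxy
  rfl

lemma tokGoal_fst {x y : TState S} (hxy : x.1 = y.1) :
    x ∈ (M.tokenCoMDP).Goal ↔ y ∈ (M.tokenCoMDP).Goal := by
  show (∀ s ∈ x.1, s ∈ M.Goal) ↔ (∀ s ∈ y.1, s ∈ M.Goal)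
  rw [hxy]

/-- Token lifting with preference for following the goal path `p`. -/
def liftTok (σ : PolC (TState S) A) (t0 : Option S)
    (p : List (TState S × WithBot ℕ)) :
    List (TState S × WithBot ℕ) → TState S × WithBot ℕ → TState S × WithBot ℕ :=
  fun acc c =>
    match acc.getLast? with
    | none => ((c.1.1, t0), c.2)
    | some d =>
      if hq : ∃ q, p.take (acc.length + 1) = acc ++ [q] ∧ q.1.1 = c.1.1 ∧ q.2 = c.2
      then (hq.choose.1, c.2)
      else if hs : ∃ τ : Option S, ((c.1.1, τ) : TState S) ∈ M.tokSucc d.1 (σ acc.dropLast d)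
      then ((c.1.1, hs.choose), c.2)
      else ((c.1.1, none), c.2)

lemma liftTok_fst (σ : PolC (TState S) A) (t0 : Option S)
    (p acc : List (TState S × WithBot ℕ)) (c : TState S × WithBot ℕ) :
    (liftTok M σ t0 p acc c).1.1 = c.1.1 := by
  unfold liftTok
  split
  · rfl
  · split
    · next hq => exact hq.choose_spec.2.1
    · split
      · rfl
      · rfl

lemma liftTok_snd (σ : PolC (TState S) A) (t0 : Option S)
    (p acc : List (TState S × WithBot ℕ)) (c : TState S × WithBot ℕ) :
    (liftTok M σ t0 p acc c).2 = c.2 := by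
  unfold liftTok
  split
  · rfl
  · split
    · rfl
    · split
      · rfl
      · rfl

lemma liftTok_concat (σ : PolC (TState S) A) (t0 : Option S)
    (p acc : List (TState S × WithBot ℕ)) (d c : TState S × WithBot ℕ) :
    liftTok M σ t0 p (acc ++ [d]) c =
      if hq : ∃ q, p.take ((acc ++ [d]).length + 1) = (acc ++ [d]) ++ [q] ∧
          q.1.1 = c.1.1 ∧ q.2 = c.2
      then (hq.choose.1, c.2)
      else if hs : ∃ τ : Option S, ((c.1.1, τ) : TState S) ∈ M.tokSucc d.1 (σ acc d)
      then ((c.1.1, hs.choose), c.2)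
      else ((c.1.1, none), c.2) := by
  simp only [liftTok, List.getLast?_concat, List.dropLast_concat]


/-- The transported policy: play `σ` on the token-lifted history. -/
def liftPol (σ : PolC (TState S) A) (t0 : Option S)
    (p : List (TState S × WithBot ℕ)) : PolC (TState S) A := fun h c =>
  σ (trF (liftTok M σ t0 p) h) (liftTok M σ t0 p (trF (liftTok M σ t0 p) h) c)

lemma lift_inv {Rel : Set (TState S)}
    (htc : ∀ x y : TState S, x.1 = y.1 → x ∈ Rel → y ∈ Rel)
    {B : Finset S} {t0 t0' : Option S} {ℓ : ℕ} {σ : PolC (TState S) A}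
    {hp : List (TState S × WithBot ℕ)} {cp : TState S × WithBot ℕ}
    (hrun : CoMDP.ReachW (M.tokenCoMDP) Rel σ ((B, t0), (ℓ : WithBot ℕ)) hp cp)
    {p : List (TState S × WithBot ℕ)} (hpeq : p = hp ++ [cp]) :
    ∀ {h c}, CoMDP.ReachW (M.tokenCoMDP) Rel (liftPol M σ t0 p) ((B, t0'), (ℓ : WithBot ℕ)) h c →
      CoMDP.ReachW (M.tokenCoMDP) Rel σ ((B, t0), (ℓ : WithBot ℕ))
        (trF (liftTok M σ t0 p) h) (liftTok M σ t0 p (trF (liftTok M σ t0 p) h) c) := by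
  intro h c hreach
  induction hreach with
  | refl => exact CoMDP.ReachW.refl
  | @step h c t hr hδ ih =>
    have hfst : (liftTok M σ t0 p (trF (liftTok M σ t0 p) h) c).1.1 = c.1.1 :=
      liftTok_fst M σ t0 p _ c
    have hsnd : (liftTok M σ t0 p (trF (liftTok M σ t0 p) h) c).2 = c.2 :=
      liftTok_snd M σ t0 p _ c
    have hres : (M.tokenCoMDP).resupW Rel c.2 c.1 (liftPol M σ t0 p h c) =
        (M.tokenCoMDP).resupW Rel (liftTok M σ t0 p (trF (liftTok M σ t0 p) h) c).2
          (liftTok M σ t0 p (trF (liftTok M σ t0 p) h) c).1 (liftPol M σ t0 p h c) := by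
      rw [hsnd]
      exact CoMDP.resupW_congr _ (tokγ_fst M hfst.symm _)
        ⟨htc _ _ hfst.symm, htc _ _ hfst⟩ _
    rw [trF_concat, liftTok_concat]
    by_cases hq : ∃ q, p.take ((trF (liftTok M σ t0 p) h ++
          [liftTok M σ t0 p (trF (liftTok M σ t0 p) h) c]).length + 1) =
        (trF (liftTok M σ t0 p) h ++ [liftTok M σ t0 p (trF (liftTok M σ t0 p) h) c]) ++ [q] ∧
        q.1.1 = ((t, (M.tokenCoMDP).resupW Rel c.2 c.1 (liftPol M σ t0 p h c)) :
          TState S × WithBot ℕ).1.1 ∧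
        q.2 = ((t, (M.tokenCoMDP).resupW Rel c.2 c.1 (liftPol M σ t0 p h c)) :
          TState S × WithBot ℕ).2
    · rw [dif_pos hq]
      obtain ⟨hq1, hq2, hq3⟩ := hq.choose_spec
      have hpre : (trF (liftTok M σ t0 p) h ++
          [liftTok M σ t0 p (trF (liftTok M σ t0 p) h) c]) ++ [hq.choose] <+: hp ++ [cp] := by
        rw [← hpeq, ← hq1]
        exact List.take_prefix _ p
      have hreachq := CoMDP.reach_of_prefix hrun hpre
      have heq : (hq.choose.1, ((t, (M.tokenCoMDP).resupW Rel c.2 c.1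
          (liftPol M σ t0 p h c)) : TState S × WithBot ℕ).2) = hq.choose :=
        Prod.ext_iff.2 ⟨rfl, hq3.symm⟩
      rw [heq]
      exact hreachq
    · rw [dif_neg hq]
      have hmem : t ∈ M.tokSucc c.1 (liftPol M σ t0 p h c) := (tokδ_pos_iff M).1 hδ
      have hB' : t.1 ∈ M.succB (liftTok M σ t0 p (trF (liftTok M σ t0 p) h) c).1.1
          (liftPol M σ t0 p h c) := by
        rw [hfst]
        exact tokSucc_fst_mem M hmem
      have hs : ∃ τ : Option S, ((t.1, τ) : TState S) ∈
          M.tokSucc (liftTok M σ t0 p (trF (liftTok M σ t0 p) h) c).1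
            (σ (trF (liftTok M σ t0 p) h) (liftTok M σ t0 p (trF (liftTok M σ t0 p) h) c)) :=
        exists_tok M hB'
      rw [dif_pos hs]
      have hδs : 0 < (M.tokenCoMDP).δ (liftTok M σ t0 p (trF (liftTok M σ t0 p) h) c).1
          (σ (trF (liftTok M σ t0 p) h) (liftTok M σ t0 p (trF (liftTok M σ t0 p) h) c))
          (t.1, hs.choose) := (tokδ_pos_iff M).2 hs.choose_spec
      have hstep := CoMDP.ReachW.step ih hδs
      have hlev : ((t, (M.tokenCoMDP).resupW Rel c.2 c.1 (liftPol M σ t0 p h c)) :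
          TState S × WithBot ℕ).2 = (M.tokenCoMDP).resupW Rel
            (liftTok M σ t0 p (trF (liftTok M σ t0 p) h) c).2
            (liftTok M σ t0 p (trF (liftTok M σ t0 p) h) c).1
            (σ (trF (liftTok M σ t0 p) h) (liftTok M σ t0 p (trF (liftTok M σ t0 p) h) c)) :=
        hres
      rw [show (((t, (M.tokenCoMDP).resupW Rel c.2 c.1 (liftPol M σ t0 p h c)) :
          TState S × WithBot ℕ).1.1, hs.choose) = ((t.1, hs.choose) : TState S) from rfl, hlev]
      exact hstep

lemma lift_safe {Rel : Set (TState S)}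
    (htc : ∀ x y : TState S, x.1 = y.1 → x ∈ Rel → y ∈ Rel)
    {B : Finset S} {t0 t0' : Option S} {ℓ : ℕ} {σ : PolC (TState S) A}
    {hp : List (TState S × WithBot ℕ)} {cp : TState S × WithBot ℕ}
    (hrun : CoMDP.ReachW (M.tokenCoMDP) Rel σ ((B, t0), (ℓ : WithBot ℕ)) hp cp)
    {p : List (TState S × WithBot ℕ)} (hpeq : p = hp ++ [cp])
    (hsafe : (M.tokenCoMDP).SafeW Rel σ ((B, t0), (ℓ : WithBot ℕ))) :
    (M.tokenCoMDP).SafeW Rel (liftPol M σ t0 p) ((B, t0'), (ℓ : WithBot ℕ)) := by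
  intro h c hreach
  have hsim := lift_inv M htc hrun hpeq (t0' := t0') hreach
  have := hsafe _ _ hsim
  rw [liftTok_snd] at this
  exact this

lemma lift_goal_inv {Rel : Set (TState S)}
    (htc : ∀ x y : TState S, x.1 = y.1 → x ∈ Rel → y ∈ Rel)
    {B : Finset S} {t0 t0' : Option S} {ℓ : ℕ} {σ : PolC (TState S) A}
    (p : List (TState S × WithBot ℕ)) :
    ∀ {h'' c''}, CoMDP.ReachW (M.tokenCoMDP) Rel σ ((B, t0), (ℓ : WithBot ℕ)) h'' c'' →
      (h'' ++ [c'']) <+: p →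
      ∃ hr cr, CoMDP.ReachW (M.tokenCoMDP) Rel (liftPol M σ t0 p)
          ((B, t0'), (ℓ : WithBot ℕ)) hr cr ∧
        trF (liftTok M σ t0 p) hr = h'' ∧
        liftTok M σ t0 p (trF (liftTok M σ t0 p) hr) cr = c'' ∧
        cr.1.1 = c''.1.1 ∧ cr.2 = c''.2 := by
  intro h'' c'' hreach
  induction hreach with
  | refl =>
    intro _
    exact ⟨[], ((B, t0'), (ℓ : WithBot ℕ)), CoMDP.ReachW.refl, rfl, rfl, rfl, rfl⟩
  | @step h c t hr hδ ih =>
    intro hpre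
    have hpre' : h ++ [c] <+: p :=
      (List.prefix_append (h ++ [c]) _).trans hpre
    obtain ⟨hr', cr, hR, hTr, hF, hfst1, hsnd1⟩ := ih hpre'
    have hact : liftPol M σ t0 p hr' cr = σ h c := by
      show σ (trF (liftTok M σ t0 p) hr') (liftTok M σ t0 p (trF (liftTok M σ t0 p) hr') cr)
        = σ h c
      rw [hF, hTr]
    have hmem : t ∈ M.tokSucc c.1 (σ h c) := (tokδ_pos_iff M).1 hδ
    have hBm : t.1 ∈ M.succB cr.1.1 (σ h c) := by
      rw [hfst1]
      exact tokSucc_fst_mem M hmem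
    obtain ⟨τ, hτ⟩ := exists_tok M hBm
    have hδr : 0 < (M.tokenCoMDP).δ cr.1 (liftPol M σ t0 p hr' cr) ((t.1, τ) : TState S) := by
      rw [hact]
      exact (tokδ_pos_iff M).2 hτ
    have hstep := CoMDP.ReachW.step hR hδr
    have hlev : (M.tokenCoMDP).resupW Rel cr.2 cr.1 (liftPol M σ t0 p hr' cr) =
        (M.tokenCoMDP).resupW Rel c.2 c.1 (σ h c) := by
      rw [hact, hsnd1]
      exact CoMDP.resupW_congr _ (tokγ_fst M hfst1 _) ⟨htc _ _ hfst1, htc _ _ hfst1.symm⟩ _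
    rw [hlev] at hstep
    have htake : p.take ((h ++ [c]).length + 1) =
        (h ++ [c]) ++ [((t, (M.tokenCoMDP).resupW Rel c.2 c.1 (σ h c)) :
          TState S × WithBot ℕ)] := by
      have := take_eq_of_prefix hpre
      simpa using this
    refine ⟨hr' ++ [cr], (((t.1, τ) : TState S),
      (M.tokenCoMDP).resupW Rel c.2 c.1 (σ h c)), hstep, ?_, ?_, rfl, rfl⟩
    · rw [trF_concat, hF, hTr]
    · rw [trF_concat, hF, hTr, liftTok_concat]
      have hcond : ∃ q, p.take ((h ++ [c]).length + 1) = (h ++ [c]) ++ [q] ∧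
          q.1.1 = ((((t.1, τ) : TState S),
            (M.tokenCoMDP).resupW Rel c.2 c.1 (σ h c))).1.1 ∧
          q.2 = ((((t.1, τ) : TState S),
            (M.tokenCoMDP).resupW Rel c.2 c.1 (σ h c))).2 :=
        ⟨(t, (M.tokenCoMDP).resupW Rel c.2 c.1 (σ h c)), htake, rfl, rfl⟩
      rw [dif_pos hcond]
      have huniq : hcond.choose = (t, (M.tokenCoMDP).resupW Rel c.2 c.1 (σ h c)) := by
        have h1 := hcond.choose_spec.1
        have h3 := htake.symm.trans h1
        have h2 := List.append_inj' h3 rfl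
        simpa using h2.2.symm
      rw [huniq]

lemma token_transport {Rel : Set (TState S)}
    (htc : ∀ x y : TState S, x.1 = y.1 → x ∈ Rel → y ∈ Rel)
    {B : Finset S} {t0 t0' : Option S} {ℓ : ℕ} {σ : PolC (TState S) A}
    (hsafe : (M.tokenCoMDP).SafeW Rel σ ((B, t0), (ℓ : WithBot ℕ)))
    (hpos : (M.tokenCoMDP).PosGoalW Rel σ ((B, t0), (ℓ : WithBot ℕ))) :
    ∃ π : PolC (TState S) A, (M.tokenCoMDP).SafeW Rel π ((B, t0'), (ℓ : WithBot ℕ)) ∧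
      (M.tokenCoMDP).PosGoalW Rel π ((B, t0'), (ℓ : WithBot ℕ)) := by
  obtain ⟨ε, hε, n, hn⟩ := hpos
  obtain ⟨hp, cp, hrun, hgoal⟩ := CoMDP.exists_goal_of_reachPW_pos (tokδ_nonneg M) n []
    ((B, t0), (ℓ : WithBot ℕ)) CoMDP.ReachW.refl (lt_of_lt_of_le hε hn)
  refine ⟨liftPol M σ t0 (hp ++ [cp]), lift_safe M htc hrun rfl hsafe, ?_⟩
  obtain ⟨hr, cr, hR, -, -, hfst1, -⟩ :=
    lift_goal_inv M htc (t0' := t0') (hp ++ [cp]) hrun (List.prefix_refl _)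
  exact CoMDP.pos_of_reach_goal (tokδ_nonneg M) hR ((tokGoal_fst M hfst1).2 hgoal)


lemma pruned_token_closed :
    ∀ x y : TState S, x.1 = y.1 → x ∈ (M.tokenCoMDP).pruned → y ∈ (M.tokenCoMDP).pruned := by
  intro x y hxy hx
  obtain ⟨Rel, ⟨hsubR, hfin⟩, hxRel⟩ := hx
  refine ⟨{z | ∃ w ∈ Rel, w.1 = z.1}, ⟨?_, ?_⟩, ⟨x, hxRel, hxy⟩⟩
  · rintro z ⟨w, hw, hwz⟩
    show ∀ s ∈ z.1, s ∈ M.R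
    rw [← hwz]
    exact hsubR hw
  · rintro z ⟨w, hw, hwz⟩
    have h1 := hfin w hw
    rw [CoMDP.TposW_ne_top_iff] at h1 ⊢
    obtain ⟨ℓ, σ, hs, hp⟩ := h1
    have hsub2 : Rel ⊆ {z | ∃ w ∈ Rel, w.1 = z.1} := fun u hu => ⟨u, hu, rfl⟩
    obtain ⟨π1, hs1, hp1⟩ :=
      CoMDP.upgrade_reload (M.tokenCoMDP) hsub2 hw hs hp
    have htc2 : ∀ u v : TState S, u.1 = v.1 →
        u ∈ {z | ∃ w ∈ Rel, w.1 = z.1} → v ∈ {z | ∃ w ∈ Rel, w.1 = z.1} := by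
      rintro u v huv ⟨w', hw', h'⟩
      exact ⟨w', hw', h'.trans huv⟩
    obtain ⟨π2, hs2, hp2⟩ := token_transport M htc2 (B := w.1) (t0 := w.2) (t0' := z.2)
      (σ := π1) hs1 hp1
    have hz : z = ((w.1, z.2) : TState S) := Prod.ext_iff.2 ⟨hwz.symm, rfl⟩
    refine ⟨ℓ, π2, ?_, ?_⟩
    · rw [hz]; exact hs2
    · rw [hz]; exact hp2

lemma Tpos_token_le (t1 t2 : Option S) (B : Finset S) :
    {e : ℕ∞ | ∃ ℓ : ℕ, e = (ℓ : ℕ∞) ∧ ∃ π : PolC (TState S) A,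
      (M.tokenCoMDP).SafeW (M.tokenCoMDP).pruned π ((B, t1), (ℓ : WithBot ℕ)) ∧
      (M.tokenCoMDP).PosGoalW (M.tokenCoMDP).pruned π ((B, t1), (ℓ : WithBot ℕ))} ⊆
    {e : ℕ∞ | ∃ ℓ : ℕ, e = (ℓ : ℕ∞) ∧ ∃ π : PolC (TState S) A,
      (M.tokenCoMDP).SafeW (M.tokenCoMDP).pruned π ((B, t2), (ℓ : WithBot ℕ)) ∧
      (M.tokenCoMDP).PosGoalW (M.tokenCoMDP).pruned π ((B, t2), (ℓ : WithBot ℕ))} := by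
  rintro e ⟨ℓ, rfl, π, hs, hp⟩
  obtain ⟨π', hs', hp'⟩ := token_transport M (pruned_token_closed M) (t0' := t2) hs hp
  exact ⟨ℓ, rfl, π', hs', hp'⟩

end TokenTransport

end Aux

/-- in the pruned token CoMDP of a consistent CoPOMDP, the
positive-threshold level is independent of the token: for any belief support
`B` and tokens `α, β ∈ B`, the least resource level from which a safe
positive-goal policy exists from `(B, α)` equals the one from `(B, β)`. -/
theorem Tpos_token_independent (M : CoPOMDP S A Ω) (hcons : M.Consistent)
    (B : Finset S) (α β : S) (hα : α ∈ B) (hβ : β ∈ B) :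
    (M.tokenCoMDP).TposW (M.tokenCoMDP).pruned (B, some α) =
      (M.tokenCoMDP).TposW (M.tokenCoMDP).pruned (B, some β) := by
  rw [CoMDP.TposW, CoMDP.TposW]
  congr 1
  exact Set.Subset.antisymm (Tpos_token_le M (some α) (some β) B)
    (Tpos_token_le M (some β) (some α) B)
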